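/- arXiv:1512.00333 — 3 statements merged into one kernel-verified Lean document; each statement's English description precedes it below -/
import Mathlib

section
/- In the q-T-fractal △_q, the boundaries B_0, B_1, …, B_q are pairwise edge-disjoint, and each boundary B_i forms a σ-τ path in △_q. -/
/-- Auxiliary adjacency: `b = a + 2^(q-i)` for some `i ≤ q` with `2^(q-i) ∣ a`.
These are exactly the (directed versions of the) edges of the `q`-T-fractal,
where the boundary `B_i` consists of the edges at scale `2^(q-i)`. -/
def fracAdjAux (q a b : ℕ) : Prop :=
  ∃ i ≤ q, 2 ^ (q - i) ∣ a ∧ b = a + 2 ^ (q - i)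

/-- The `q`-T-fractal, realized on the vertex set `{0, 1, …, 2^q}` (the vertices of the
outermost boundary path): the left copy of `△_{q-1}` lives on `{0,…,2^{q-1}}`, the right
copy on `{2^{q-1},…,2^q}`, and `{0, 2^q}` is the extra edge; `σ = 0` and `τ = 2^q`. -/
def TFractal (q : ℕ) : SimpleGraph (Fin (2 ^ q + 1)) where
  Adj a b := fracAdjAux q a.val b.val ∨ fracAdjAux q b.val a.val
  symm := ⟨fun _ _ h => h.symm⟩
  loopless := ⟨by
    intro a h
    rcases h with ⟨i, _, _, h⟩ | ⟨i, _, _, h⟩ <;>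
      · have := Nat.two_pow_pos (q - i)
        omega⟩

/-- The special vertex `σ` of the `q`-T-fractal. -/
def sigV (q : ℕ) : Fin (2 ^ q + 1) := ⟨0, Nat.succ_pos _⟩

/-- The special vertex `τ` of the `q`-T-fractal. -/
def tauV (q : ℕ) : Fin (2 ^ q + 1) := ⟨2 ^ q, Nat.lt_succ_self _⟩

/-- The boundary `B_i` of the `q`-T-fractal: the edges created in round `i`,
i.e. the edges `{a, a + 2^(q-i)}` with `2^(q-i) ∣ a`. -/
def boundaryB (q i : ℕ) : Set (Sym2 (Fin (2 ^ q + 1))) :=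
  { e | ∃ a b : Fin (2 ^ q + 1),
      e = s(a, b) ∧ 2 ^ (q - i) ∣ a.val ∧ b.val = a.val + 2 ^ (q - i) }

/-- `C` is a `σ`-`τ` edge cut in the `q`-T-fractal. -/
def IsSTCut (q : ℕ) (C : Set (Sym2 (Fin (2 ^ q + 1)))) : Prop :=
  ¬ ((TFractal q).deleteEdges C).Reachable (sigV q) (tauV q)

/-- `C` is a minimum `σ`-`τ` edge cut in the `q`-T-fractal. -/
def MinSTCut (q : ℕ) (C : Set (Sym2 (Fin (2 ^ q + 1)))) : Prop :=
  C ⊆ (TFractal q).edgeSet ∧ IsSTCut q C ∧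
    ∀ C' ⊆ (TFractal q).edgeSet, IsSTCut q C' → C.ncard ≤ C'.ncard

lemma pow_mul_pow (q i : ℕ) (hi : i ≤ q) : 2 ^ i * 2 ^ (q - i) = 2 ^ q := by
  rw [← pow_add]; congr 1; omega

def vtx (q i m : ℕ) (hi : i ≤ q) : Fin (2 ^ q + 1) :=
  ⟨(2 ^ i - m) * 2 ^ (q - i), by
    have h := pow_mul_pow q i hi
    calc (2 ^ i - m) * 2 ^ (q - i) ≤ 2 ^ i * 2 ^ (q - i) :=
          Nat.mul_le_mul_right _ (Nat.sub_le _ _)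
      _ = 2 ^ q := h
      _ < 2 ^ q + 1 := Nat.lt_succ_self _⟩

lemma path_aux (q i : ℕ) (hi : i ≤ q) :
    ∀ m, m ≤ 2 ^ i → ∃ p : (TFractal q).Walk (vtx q i m hi) (tauV q),
      p.IsPath ∧
      {e | e ∈ p.edges} = {e | ∃ a b : Fin (2 ^ q + 1),
        e = s(a, b) ∧ 2 ^ (q - i) ∣ a.val ∧ b.val = a.val + 2 ^ (q - i) ∧
        (2 ^ i - m) * 2 ^ (q - i) ≤ a.val} ∧
      ∀ v ∈ p.support, (2 ^ i - m) * 2 ^ (q - i) ≤ v.val := by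
  have hd : 0 < 2 ^ (q - i) := Nat.two_pow_pos _
  have hpow := pow_mul_pow q i hi
  intro m
  induction m with
  | zero =>
    intro _
    have hv : vtx q i 0 hi = tauV q := by
      apply Fin.ext
      simp [vtx, tauV, hpow]
    rw [hv]
    refine ⟨SimpleGraph.Walk.nil, SimpleGraph.Walk.IsPath.nil, ?_, ?_⟩
    · ext e
      simp only [SimpleGraph.Walk.edges_nil, List.not_mem_nil, Set.mem_setOf_eq,
        false_iff]
      rintro ⟨a, b, -, -, hb, ha⟩
      have hb2 := b.isLt
      have ha2 : 2 ^ q ≤ a.val := by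
        calc 2 ^ q = 2 ^ i * 2 ^ (q - i) := hpow.symm
          _ = (2 ^ i - 0) * 2 ^ (q - i) := by norm_num
          _ ≤ a.val := ha
      omega
    · intro v hv
      simp only [SimpleGraph.Walk.support_nil, List.mem_singleton] at hv
      subst hv
      simp only [tauV, Nat.sub_zero, hpow]
      exact le_refl _
  | succ m ih =>
    intro hm
    obtain ⟨p, hpath, hedges, hsupp⟩ := ih (by omega)
    have hstep : (2 ^ i - m) * 2 ^ (q - i)
        = (2 ^ i - (m + 1)) * 2 ^ (q - i) + 2 ^ (q - i) := by
      have : 2 ^ i - m = (2 ^ i - (m + 1)) + 1 := by omega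
      rw [this, add_mul, one_mul]
    have hadj : (TFractal q).Adj (vtx q i (m + 1) hi) (vtx q i m hi) := by
      left
      exact ⟨i, hi, ⟨2 ^ i - (m + 1), by simp [vtx, mul_comm]⟩, hstep⟩
    refine ⟨SimpleGraph.Walk.cons hadj p, ?_, ?_, ?_⟩
    · refine hpath.cons ?_
      intro hmem
      have := hsupp _ hmem
      simp only [vtx] at this
      have hlt : (2 ^ i - (m + 1)) * 2 ^ (q - i) < (2 ^ i - m) * 2 ^ (q - i) :=
        (Nat.mul_lt_mul_right hd).2 (by omega)
      omega
    · ext e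
      simp only [SimpleGraph.Walk.edges_cons, List.mem_cons, Set.mem_setOf_eq]
      constructor
      · rintro (rfl | he)
        · exact ⟨_, _, rfl, ⟨2 ^ i - (m + 1), by simp [vtx, mul_comm]⟩, hstep,
            le_refl _⟩
        · obtain ⟨a, b, rfl, h1, h2, h3⟩ := (Set.ext_iff.mp hedges _).1 he
          refine ⟨a, b, rfl, h1, h2, ?_⟩
          calc (2 ^ i - (m + 1)) * 2 ^ (q - i)
              ≤ (2 ^ i - m) * 2 ^ (q - i) := Nat.mul_le_mul_right _ (by omega)
            _ ≤ a.val := h3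
      · rintro ⟨a, b, rfl, ⟨t, ht⟩, h2, h3⟩
        have htge : 2 ^ i - (m + 1) ≤ t := by
          by_contra hc
          push_neg at hc
          have : a.val < (2 ^ i - (m + 1)) * 2 ^ (q - i) := by
            rw [ht, mul_comm]
            exact (Nat.mul_lt_mul_right hd).2 hc
          omega
        rcases eq_or_lt_of_le htge with heq | hlt
        · left
          have ha : a = vtx q i (m + 1) hi := by
            apply Fin.ext; simp only [vtx]; rw [ht, ← heq, mul_comm]
          have hb : b = vtx q i m hi := by
            apply Fin.ext; simp only [vtx]
            rw [h2, ht, ← heq, mul_comm]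
            exact hstep.symm
          rw [ha, hb]
        · right
          rw [Set.ext_iff] at hedges
          refine (hedges s(a, b)).2 ⟨a, b, rfl, ⟨t, ht⟩, h2, ?_⟩
          calc (2 ^ i - m) * 2 ^ (q - i) ≤ t * 2 ^ (q - i) :=
                Nat.mul_le_mul_right _ (by omega)
            _ = a.val := by rw [ht, mul_comm]
    · intro v hv
      simp only [SimpleGraph.Walk.support_cons, List.mem_cons] at hv
      rcases hv with rfl | hv
      · exact le_refl _
      · calc (2 ^ i - (m + 1)) * 2 ^ (q - i)
            ≤ (2 ^ i - m) * 2 ^ (q - i) := Nat.mul_le_mul_right _ (by omega)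
          _ ≤ v.val := hsupp _ hv

/-- the boundaries `B_0, …, B_q` of the `q`-T-fractal are pairwise
edge-disjoint, and each boundary `B_i` forms a `σ`-`τ` path in `△_q`. -/
theorem tfractal_boundaries_disjoint_and_paths (q : ℕ) :
    (∀ i ≤ q, ∀ j ≤ q, i ≠ j → Disjoint (boundaryB q i) (boundaryB q j)) ∧
      (∀ i ≤ q, ∃ p : (TFractal q).Walk (sigV q) (tauV q),
        p.IsPath ∧ {e | e ∈ p.edges} = boundaryB q i) := by
  constructor
  · intro i hi j hj hij
    rw [Set.disjoint_left]
    rintro e ⟨a, b, rfl, h1, h2⟩ ⟨a', b', he, h1', h2'⟩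
    have hdi : 0 < 2 ^ (q - i) := Nat.two_pow_pos _
    have hdj : 0 < 2 ^ (q - j) := Nat.two_pow_pos _
    have hne : 2 ^ (q - i) ≠ 2 ^ (q - j) := by
      intro h
      have := Nat.pow_right_injective (le_refl 2) h
      omega
    rw [Sym2.eq_iff] at he
    rcases he with ⟨ha, hb⟩ | ⟨ha, hb⟩
    · have e1 := congrArg Fin.val ha
      have e2 := congrArg Fin.val hb
      omega
    · have e1 := congrArg Fin.val ha
      have e2 := congrArg Fin.val hb
      omega
  · intro i hi
    obtain ⟨p, hpath, hedges, -⟩ := path_aux q i hi (2 ^ i) (le_refl _)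
    have hv : vtx q i (2 ^ i) hi = sigV q := by
      apply Fin.ext; simp [vtx, sigV]
    refine ⟨p.copy hv rfl, ?_, ?_⟩
    · rwa [SimpleGraph.Walk.isPath_copy]
    · have hec : (p.copy hv rfl).edges = p.edges := SimpleGraph.Walk.edges_copy _ _ _
      have : {e | e ∈ (p.copy hv rfl).edges} = {e | e ∈ p.edges} := by rw [hec]
      rw [this, hedges]
      ext e
      simp only [boundaryB, Set.mem_setOf_eq, Nat.sub_self, zero_mul, Nat.zero_le,
        and_true]
end

section
/- The q-T-fractal △_q has exactly 2^q pairwise distinct minimum σ-τ edge cuts. -/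
/-- `C` contains an edge whose endpoint values are `u` and `v`. -/
def memC (q : ℕ) (C : Set (Sym2 (Fin (2 ^ q + 1)))) (u v : ℕ) : Prop :=
  ∃ a b : Fin (2 ^ q + 1), a.val = u ∧ b.val = v ∧ s(a, b) ∈ C

/-- The recursive blocking predicate on dyadic blocks `[u, u + 2^k]`. -/
def Blocked (q : ℕ) (C : Set (Sym2 (Fin (2 ^ q + 1)))) : ℕ → ℕ → Prop
  | 0, u => memC q C u (u + 1)
  | (k + 1), u => memC q C u (u + 2 ^ (k + 1)) ∧
      (Blocked q C k u ∨ Blocked q C k (u + 2 ^ k))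

lemma adj_step (q k u : ℕ) (hk : k ≤ q) (hdvd : 2 ^ k ∣ u) (hle : u + 2 ^ k ≤ 2 ^ q)
    (hu : u < 2 ^ q + 1) (hv : u + 2 ^ k < 2 ^ q + 1) :
    (TFractal q).Adj ⟨u, hu⟩ ⟨u + 2 ^ k, hv⟩ :=
  Or.inl ⟨q - k, Nat.sub_le _ _, by rw [Nat.sub_sub_self hk]; exact hdvd,
    by rw [Nat.sub_sub_self hk]⟩

lemma reach_of_not_blocked (q : ℕ) (C : Set (Sym2 (Fin (2 ^ q + 1)))) :
    ∀ k u (hd : 2 ^ k ∣ u) (hle : u + 2 ^ k ≤ 2 ^ q), ¬ Blocked q C k u →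
    ((TFractal q).deleteEdges C).Reachable ⟨u, by omega⟩ ⟨u + 2 ^ k, by omega⟩ := by
  intro k
  induction k with
  | zero =>
    intro u hd hle hnb
    refine SimpleGraph.Adj.reachable ?_
    rw [SimpleGraph.deleteEdges_adj]
    refine ⟨adj_step q 0 u (Nat.zero_le _) hd hle _ _, fun hmem => hnb ?_⟩
    exact ⟨_, _, rfl, rfl, hmem⟩
  | succ k ih =>
    intro u hd hle hnb
    have hk1q : k + 1 ≤ q := by
      refine (Nat.pow_le_pow_iff_right (le_refl 2)).mp ?_
      omega
    by_cases hmem : memC q C u (u + 2 ^ (k + 1))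
    · -- top edge is in C, use the two sub-blocks
      have hnb' : ¬ (Blocked q C k u ∨ Blocked q C k (u + 2 ^ k)) := fun h => hnb ⟨hmem, h⟩
      push_neg at hnb'
      have hpow : 2 ^ (k + 1) = 2 ^ k + 2 ^ k := by rw [pow_succ]; omega
      have hd1 : 2 ^ k ∣ u := dvd_trans (pow_dvd_pow 2 (Nat.le_succ k)) hd
      have h1 := ih u hd1 (by omega) hnb'.1
      have h2 := ih (u + 2 ^ k) (Dvd.dvd.add hd1 dvd_rfl) (by omega) hnb'.2
      have := h1.trans h2
      convert this using 2
      omega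
    · refine SimpleGraph.Adj.reachable ?_
      rw [SimpleGraph.deleteEdges_adj]
      refine ⟨adj_step q (k + 1) u hk1q hd hle _ _, fun hm => hmem ?_⟩
      exact ⟨_, _, rfl, rfl, hm⟩

lemma blocked_threshold (q : ℕ) (C : Set (Sym2 (Fin (2 ^ q + 1)))) :
    ∀ k u, 2 ^ k ∣ u → u + 2 ^ k ≤ 2 ^ q → Blocked q C k u →
    ∃ t, u < t ∧ t ≤ u + 2 ^ k ∧
      ∀ m ≤ k, memC q C ((t - 1) / 2 ^ m * 2 ^ m) ((t - 1) / 2 ^ m * 2 ^ m + 2 ^ m) := by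
  intro k
  induction k with
  | zero =>
    intro u _ _ hb
    refine ⟨u + 1, by omega, le_refl _, ?_⟩
    intro m hm
    interval_cases m
    simpa [Blocked] using hb
  | succ k ih =>
    intro u hd hle hb
    obtain ⟨hmem, hor⟩ := hb
    have hpow : 2 ^ (k + 1) = 2 ^ k + 2 ^ k := by rw [pow_succ]; omega
    have hd1 : 2 ^ k ∣ u := dvd_trans (pow_dvd_pow 2 (Nat.le_succ k)) hd
    have key : ∃ t, u < t ∧ t ≤ u + 2 ^ (k + 1) ∧
        ∀ m ≤ k, memC q C ((t - 1) / 2 ^ m * 2 ^ m) ((t - 1) / 2 ^ m * 2 ^ m + 2 ^ m) := by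
      rcases hor with hbl | hbl
      · obtain ⟨t, h1, h2, h3⟩ := ih u hd1 (by omega) hbl
        exact ⟨t, h1, by omega, h3⟩
      · obtain ⟨t, h1, h2, h3⟩ := ih (u + 2 ^ k) (Dvd.dvd.add hd1 dvd_rfl) (by omega) hbl
        exact ⟨t, by omega, by omega, h3⟩
    obtain ⟨t, h1, h2, h3⟩ := key
    refine ⟨t, h1, h2, ?_⟩
    intro m hm
    rcases Nat.lt_or_ge m (k + 1) with hmk | hmk
    · exact h3 m (by omega)
    · have hm' : m = k + 1 := by omega
      subst hm'
      -- (t-1) / 2^(k+1) * 2^(k+1) = u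
      obtain ⟨c, hc⟩ := hd
      have e1 : c * 2 ^ (k + 1) = u := by rw [mul_comm]; exact hc.symm
      have e2 : (c + 1) * 2 ^ (k + 1) = u + 2 ^ (k + 1) := by rw [add_mul, e1, one_mul]
      have hdiv : (t - 1) / 2 ^ (k + 1) = c := by
        refine Nat.div_eq_of_lt_le (by omega) ?_
        show t - 1 < (c + 1) * 2 ^ (k + 1)
        omega
      rw [hdiv, e1]
      exact hmem

/-- The threshold cut at `t`: all edges crossing from `< t` to `≥ t`. -/
def cutAt (q t : ℕ) : Set (Sym2 (Fin (2 ^ q + 1))) :=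
  {e | ∃ a b : Fin (2 ^ q + 1), e = s(a, b) ∧ (TFractal q).Adj a b ∧ a.val < t ∧ t ≤ b.val}

lemma cutAt_subset_edgeSet (q t : ℕ) : cutAt q t ⊆ (TFractal q).edgeSet := by
  rintro e ⟨a, b, rfl, hadj, -, -⟩
  exact hadj

lemma isSTCut_of_cutAt_subset (q t : ℕ) (C : Set (Sym2 (Fin (2 ^ q + 1))))
    (ht1 : 1 ≤ t) (ht2 : t ≤ 2 ^ q) (hsub : cutAt q t ⊆ C) : IsSTCut q C := by
  intro hreach
  obtain ⟨w⟩ := hreach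
  have key : ∀ (x y : Fin (2 ^ q + 1)) (_ : ((TFractal q).deleteEdges C).Walk x y),
      x.val < t → y.val < t := by
    intro x y w
    induction w with
    | nil => exact id
    | cons h p ih =>
      intro hx
      rename_i x' z' y'
      rw [SimpleGraph.deleteEdges_adj] at h
      apply ih
      by_contra hz
      exact h.2 (hsub ⟨x', z', rfl, h.1, hx, by omega⟩)
  have := key _ _ w (by simp [sigV]; omega)
  simp only [tauV] at this
  omega

lemma cutEdge_bound (q t i : ℕ) (ht : t ≤ 2 ^ q) :
    (t - 1) / 2 ^ (q - i) * 2 ^ (q - i) + 2 ^ (q - i) ≤ 2 ^ q := by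
  have h1 : (t - 1) / 2 ^ (q - i) * 2 ^ (q - i) ≤ t - 1 := Nat.div_mul_le_self _ _
  have h0 : (1 : ℕ) ≤ 2 ^ q := Nat.one_le_two_pow
  have ha : (t - 1) / 2 ^ (q - i) * 2 ^ (q - i) < 2 ^ q := by omega
  have hd : 2 ^ (q - i) ∣ 2 ^ q - (t - 1) / 2 ^ (q - i) * 2 ^ (q - i) :=
    Nat.dvd_sub (pow_dvd_pow 2 (Nat.sub_le q i)) (dvd_mul_left _ _)
  have := Nat.le_of_dvd (by omega) hd
  omega

/-- The unique edge of scale `2^(q-i)` crossing the threshold `t`. -/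
def cutEdge (q t i : ℕ) (ht : t ≤ 2 ^ q) : Sym2 (Fin (2 ^ q + 1)) :=
  s(⟨(t - 1) / 2 ^ (q - i) * 2 ^ (q - i),
      Nat.lt_succ_of_le (le_trans (Nat.le_add_right _ _) (cutEdge_bound q t i ht))⟩,
    ⟨(t - 1) / 2 ^ (q - i) * 2 ^ (q - i) + 2 ^ (q - i),
      Nat.lt_succ_of_le (cutEdge_bound q t i ht)⟩)

lemma cutEdge_mem (q t i : ℕ) (ht1 : 1 ≤ t) (ht : t ≤ 2 ^ q) (hi : i ≤ q) :
    cutEdge q t i ht ∈ cutAt q t := by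
  have h1 : (t - 1) / 2 ^ (q - i) * 2 ^ (q - i) ≤ t - 1 := Nat.div_mul_le_self _ _
  have hdm := Nat.div_add_mod (t - 1) (2 ^ (q - i))
  have hml := Nat.mod_lt (t - 1) (Nat.two_pow_pos (q - i))
  have hcomm : 2 ^ (q - i) * ((t - 1) / 2 ^ (q - i)) = (t - 1) / 2 ^ (q - i) * 2 ^ (q - i) :=
    mul_comm _ _
  refine ⟨_, _, rfl, ?_, ?_, ?_⟩
  · exact adj_step q (q - i) _ (Nat.sub_le _ _) (dvd_mul_left _ _) (cutEdge_bound q t i ht) _ _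
  · show (t - 1) / 2 ^ (q - i) * 2 ^ (q - i) < t
    omega
  · show t ≤ (t - 1) / 2 ^ (q - i) * 2 ^ (q - i) + 2 ^ (q - i)
    omega

lemma cutAt_eq (q t : ℕ) (ht1 : 1 ≤ t) (ht2 : t ≤ 2 ^ q) :
    cutAt q t = (fun i => cutEdge q t i ht2) '' Set.Iic q := by
  ext e
  constructor
  · rintro ⟨a, b, rfl, hadj, hlt, hge⟩
    rcases hadj with ⟨i, hi, hdvd, heq⟩ | ⟨i, hi, hdvd, heq⟩
    · refine ⟨i, hi, ?_⟩
      obtain ⟨c, hc⟩ := hdvd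
      have hcs : c * 2 ^ (q - i) = a.val := by rw [mul_comm]; exact hc.symm
      have hc1 : (c + 1) * 2 ^ (q - i) = a.val + 2 ^ (q - i) := by
        rw [add_mul, hcs, one_mul]
      have hdiv : (t - 1) / 2 ^ (q - i) = c := by
        refine Nat.div_eq_of_lt_le ?_ ?_
        · show c * 2 ^ (q - i) ≤ t - 1
          omega
        · show t - 1 < (c + 1) * 2 ^ (q - i)
          omega
      have hav : a.val = (t - 1) / 2 ^ (q - i) * 2 ^ (q - i) := by
        rw [hdiv]; omega
      show cutEdge q t i ht2 = s(a, b)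
      unfold cutEdge
      exact Sym2.eq_iff.mpr (Or.inl ⟨Fin.ext (by simp [hav]), Fin.ext (by simp [heq, hav])⟩)
    · have := Nat.two_pow_pos (q - i)
      omega
  · rintro ⟨i, hi, rfl⟩
    exact cutEdge_mem q t i ht1 ht2 hi

lemma cutEdge_injOn (q t : ℕ) (ht : t ≤ 2 ^ q) :
    Set.InjOn (fun i => cutEdge q t i ht) (Set.Iic q) := by
  intro i hi j hj hij
  simp only [cutEdge, Sym2.eq_iff] at hij
  have hpi := Nat.two_pow_pos (q - i)
  have hpj := Nat.two_pow_pos (q - j)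
  rcases hij with ⟨h1, h2⟩ | ⟨h1, h2⟩
  · have h1' := congrArg Fin.val h1
    have h2' := congrArg Fin.val h2
    simp only [] at h1' h2'
    have hss : 2 ^ (q - i) = 2 ^ (q - j) := by omega
    have := Nat.pow_right_injective (le_refl 2) hss
    simp only [Set.mem_Iic] at hi hj
    omega
  · have h1' := congrArg Fin.val h1
    have h2' := congrArg Fin.val h2
    simp only [] at h1' h2'
    omega

lemma cutAt_ncard (q t : ℕ) (ht1 : 1 ≤ t) (ht2 : t ≤ 2 ^ q) :
    (cutAt q t).ncard = q + 1 := by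
  rw [cutAt_eq q t ht1 ht2, Set.ncard_image_of_injOn (cutEdge_injOn q t ht2),
    ← Finset.coe_Iic, Set.ncard_coe_finset, Nat.card_Iic]

/-- Any σ-τ cut contains an edge of every scale `2^(q-i)`. -/
lemma cut_has_scale_edge (q : ℕ) (C : Set (Sym2 (Fin (2 ^ q + 1)))) (hC : IsSTCut q C)
    (i : ℕ) (hi : i ≤ q) :
    ∃ a b : Fin (2 ^ q + 1), b.val = a.val + 2 ^ (q - i) ∧ s(a, b) ∈ C := by
  by_contra hno
  push_neg at hno
  apply hC
  have key : ∀ k (hk : k * 2 ^ (q - i) ≤ 2 ^ q),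
      ((TFractal q).deleteEdges C).Reachable (sigV q) ⟨k * 2 ^ (q - i), by omega⟩ := by
    intro k
    induction k with
    | zero =>
      intro _
      have h0 : (⟨0 * 2 ^ (q - i), by omega⟩ : Fin (2 ^ q + 1)) = sigV q :=
        Fin.ext (by simp [sigV])
      rw [h0]
    | succ k ih =>
      intro hk
      have hk' : k * 2 ^ (q - i) ≤ 2 ^ q := by
        have : k * 2 ^ (q - i) ≤ (k + 1) * 2 ^ (q - i) :=
          Nat.mul_le_mul_right _ (Nat.le_succ k)
        omega
      have hstep : k * 2 ^ (q - i) + 2 ^ (q - i) ≤ 2 ^ q := by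
        have : (k + 1) * 2 ^ (q - i) = k * 2 ^ (q - i) + 2 ^ (q - i) := by ring
        omega
      refine (ih hk').trans (SimpleGraph.Adj.reachable ?_)
      rw [SimpleGraph.deleteEdges_adj]
      constructor
      · have := adj_step q (q - i) (k * 2 ^ (q - i)) (Nat.sub_le _ _)
          (dvd_mul_left _ _) hstep (by omega) (by omega)
        convert this using 2
        ring
      · intro hmem
        have hfin : (⟨(k + 1) * 2 ^ (q - i), by omega⟩ : Fin (2 ^ q + 1)) =
            ⟨k * 2 ^ (q - i) + 2 ^ (q - i), by omega⟩ :=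
          Fin.ext (by show (k + 1) * 2 ^ (q - i) = k * 2 ^ (q - i) + 2 ^ (q - i); ring)
        refine hno ⟨k * 2 ^ (q - i), by omega⟩ ⟨(k + 1) * 2 ^ (q - i), by omega⟩ ?_ ?_
        · show (k + 1) * 2 ^ (q - i) = k * 2 ^ (q - i) + 2 ^ (q - i); ring
        · exact hmem
  have h2q : 2 ^ i * 2 ^ (q - i) = 2 ^ q := by
    rw [← pow_add]; congr 1; omega
  have := key (2 ^ i) (by omega)
  convert this using 1
  exact Fin.ext (by show 2 ^ q = 2 ^ i * 2 ^ (q - i); omega)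

/-- Any σ-τ cut has at least `q + 1` edges. -/
lemma cut_ncard_lb (q : ℕ) (C : Set (Sym2 (Fin (2 ^ q + 1)))) (hC : IsSTCut q C) :
    q + 1 ≤ C.ncard := by
  have h : ∀ i : Fin (q + 1), ∃ e : Sym2 (Fin (2 ^ q + 1)), e ∈ C ∧
      ∃ a b : Fin (2 ^ q + 1), e = s(a, b) ∧ b.val = a.val + 2 ^ (q - i.val) := by
    intro i
    obtain ⟨a, b, hab, hmem⟩ := cut_has_scale_edge q C hC i.val (by omega)
    exact ⟨s(a, b), hmem, a, b, rfl, hab⟩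
  choose f hfC hf using h
  have hinj : Function.Injective f := by
    intro i j hij
    obtain ⟨a, b, he1, hb1⟩ := hf i
    obtain ⟨a', b', he2, hb2⟩ := hf j
    rw [he1, he2] at hij
    have hpi := Nat.two_pow_pos (q - i.val)
    have hpj := Nat.two_pow_pos (q - j.val)
    rcases Sym2.eq_iff.mp hij with ⟨h1, h2⟩ | ⟨h1, h2⟩
    · have h1' := congrArg Fin.val h1
      have h2' := congrArg Fin.val h2
      have hss : 2 ^ (q - i.val) = 2 ^ (q - j.val) := by omega
      have := Nat.pow_right_injective (le_refl 2) hss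
      have hi := i.isLt
      have hj := j.isLt
      exact Fin.ext (by omega)
    · have h1' := congrArg Fin.val h1
      have h2' := congrArg Fin.val h2
      omega
  have hsub : Set.range f ⊆ C := by rintro e ⟨i, rfl⟩; exact hfC i
  have h1 : (Set.range f).ncard = q + 1 := by
    rw [← Nat.card_coe_set_eq, Nat.card_range_of_injective hinj, Nat.card_eq_fintype_card,
      Fintype.card_fin]
  rw [← h1]
  exact Set.ncard_le_ncard hsub (Set.toFinite C)

lemma minSTCut_cutAt (q t : ℕ) (ht1 : 1 ≤ t) (ht2 : t ≤ 2 ^ q) : MinSTCut q (cutAt q t) := by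
  refine ⟨cutAt_subset_edgeSet q t, isSTCut_of_cutAt_subset q t _ ht1 ht2 subset_rfl, ?_⟩
  intro C' _ hC'
  rw [cutAt_ncard q t ht1 ht2]
  exact cut_ncard_lb q C' hC'

lemma minSTCut_eq_cutAt (q : ℕ) (C : Set (Sym2 (Fin (2 ^ q + 1)))) (hC : MinSTCut q C) :
    ∃ t, 1 ≤ t ∧ t ≤ 2 ^ q ∧ C = cutAt q t := by
  obtain ⟨hsub, hcut, hmin⟩ := hC
  have hb : Blocked q C q 0 := by
    by_contra hnb
    have hr := reach_of_not_blocked q C q 0 (dvd_zero _) (by omega) hnb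
    apply hcut
    convert hr using 1
    all_goals exact Fin.ext (by simp [sigV, tauV])
  obtain ⟨t, ht0, htq, hall⟩ := blocked_threshold q C q 0 (dvd_zero _) (by omega) hb
  have ht1 : 1 ≤ t := ht0
  have ht2 : t ≤ 2 ^ q := by omega
  have hsub2 : cutAt q t ⊆ C := by
    rw [cutAt_eq q t ht1 ht2]
    rintro e ⟨i, hi, rfl⟩
    obtain ⟨a, b, ha, hbv, hmem⟩ := hall (q - i) (Nat.sub_le _ _)
    have heq : cutEdge q t i ht2 = s(a, b) := by
      unfold cutEdge
      exact Sym2.eq_iff.mpr (Or.inl ⟨Fin.ext ha.symm, Fin.ext hbv.symm⟩)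
    show cutEdge q t i ht2 ∈ C
    rw [heq]
    exact hmem
  have hle : C.ncard ≤ (cutAt q t).ncard :=
    hmin (cutAt q t) (cutAt_subset_edgeSet q t)
      (isSTCut_of_cutAt_subset q t _ ht1 ht2 subset_rfl)
  exact ⟨t, ht1, ht2, (Set.eq_of_subset_of_ncard_le hsub2 hle).symm⟩

lemma cutAt_injOn (q : ℕ) : Set.InjOn (cutAt q) (Set.Icc 1 (2 ^ q)) := by
  rintro t ⟨ht1, ht2⟩ t' ⟨ht1', ht2'⟩ h
  have hmem : s((⟨t - 1, by omega⟩ : Fin (2 ^ q + 1)), ⟨t, by omega⟩) ∈ cutAt q t := by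
    refine ⟨_, _, rfl, Or.inl ⟨q, le_refl q, ?_, ?_⟩, ?_, ?_⟩
    · simp [Nat.sub_self]
    · show t = t - 1 + 2 ^ (q - q)
      rw [Nat.sub_self, pow_zero]; omega
    · show t - 1 < t; omega
    · exact le_refl t
  rw [h] at hmem
  obtain ⟨a, b, heq, hadj, hlt, hge⟩ := hmem
  rcases Sym2.eq_iff.mp heq with ⟨h1, h2⟩ | ⟨h1, h2⟩
  · have h1' := congrArg Fin.val h1
    have h2' := congrArg Fin.val h2
    simp only [] at h1' h2'
    omega
  · have h1' := congrArg Fin.val h1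
    have h2' := congrArg Fin.val h2
    simp only [] at h1' h2'
    omega

/-- the `q`-T-fractal has exactly `2^q` pairwise distinct minimum
`σ`-`τ` edge cuts. -/
theorem tfractal_number_of_min_cuts (q : ℕ) :
    {C : Set (Sym2 (Fin (2 ^ q + 1))) | MinSTCut q C}.ncard = 2 ^ q := by
  have hset : {C : Set (Sym2 (Fin (2 ^ q + 1))) | MinSTCut q C} =
      cutAt q '' Set.Icc 1 (2 ^ q) := by
    ext C
    simp only [Set.mem_setOf_eq, Set.mem_image, Set.mem_Icc]
    constructor
    · intro h
      obtain ⟨t, h1, h2, h3⟩ := minSTCut_eq_cutAt q C h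
      exact ⟨t, ⟨h1, h2⟩, h3.symm⟩
    · rintro ⟨t, ⟨h1, h2⟩, rfl⟩
      exact minSTCut_cutAt q t h1 h2
  rw [hset, Set.ncard_image_of_injOn (cutAt_injOn q), ← Finset.coe_Icc,
    Set.ncard_coe_finset, Nat.card_Icc]
  exact Nat.add_sub_cancel _ _
end

section
/- The diameter of the q-T-fractal △_q is O(q); more precisely, any two vertices of △_q are at distance at most 2q + 2. -/
lemma tf_adj (q : ℕ) (a b : Fin (2 ^ q + 1)) (k : ℕ) (hk : k ≤ q)
    (hd : 2 ^ k ∣ a.val) (hb : b.val = a.val + 2 ^ k) : (TFractal q).Adj a b := by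
  left
  exact ⟨q - k, Nat.sub_le _ _, by rwa [Nat.sub_sub_self hk],
    by rw [Nat.sub_sub_self hk]; exact hb⟩

lemma tf_walk (q : ℕ) : ∀ k, k ≤ q → ∀ a v : Fin (2 ^ q + 1),
    2 ^ k ∣ a.val → a.val ≤ v.val → v.val - a.val ≤ 2 ^ k →
    ∃ p : (TFractal q).Walk a v, p.length ≤ k + 1 := by
  intro k
  induction k with
  | zero =>
    intro _ a v hdvd hle hd
    simp only [pow_zero] at hd
    rcases Nat.lt_or_ge a.val v.val with h | h
    · have hb : v.val = a.val + 2 ^ 0 := by simp; omega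
      exact ⟨SimpleGraph.Walk.cons (tf_adj q a v 0 (Nat.zero_le _) (one_dvd _) hb)
        SimpleGraph.Walk.nil, by simp⟩
    · have : a = v := Fin.ext (by omega)
      subst this
      exact ⟨SimpleGraph.Walk.nil, by simp⟩
  | succ k ih =>
    intro hkq a v hdvd hle hd
    rcases le_or_gt (v.val - a.val) (2 ^ k) with h | h
    · obtain ⟨p, hp⟩ := ih (le_of_lt hkq) a v
        (dvd_trans (pow_dvd_pow 2 (Nat.le_succ k)) hdvd) hle h
      exact ⟨p, by omega⟩
    · have hav : a.val + 2 ^ k ≤ 2 ^ q := by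
        have := v.isLt; omega
      set a' : Fin (2 ^ q + 1) := ⟨a.val + 2 ^ k, by omega⟩ with ha'
      have hadj : (TFractal q).Adj a a' :=
        tf_adj q a a' k (le_of_lt hkq)
          (dvd_trans (pow_dvd_pow 2 (Nat.le_succ k)) hdvd) rfl
      have hdvd' : 2 ^ k ∣ a'.val := by
        simp only [ha']
        exact Dvd.dvd.add (dvd_trans (pow_dvd_pow 2 (Nat.le_succ k)) hdvd) dvd_rfl
      obtain ⟨p, hp⟩ := ih (le_of_lt hkq) a' v hdvd'
        (by simp only [ha']; omega)
        (by simp only [ha']; rw [pow_succ] at hd; omega)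
      exact ⟨SimpleGraph.Walk.cons hadj p, by simp; omega⟩

lemma tf_dist_sig (q : ℕ) (v : Fin (2 ^ q + 1)) :
    (TFractal q).Reachable (sigV q) v ∧ (TFractal q).dist (sigV q) v ≤ q + 1 := by
  obtain ⟨p, hp⟩ := tf_walk q q le_rfl (sigV q) v (by simp [sigV]) (by simp [sigV])
    (by have := v.isLt; simp [sigV]; omega)
  exact ⟨⟨p⟩, le_trans (SimpleGraph.dist_le p) hp⟩

/-- the diameter of the `q`-T-fractal is `O(q)`; more precisely, `△_q`
is connected and any two of its vertices are at distance at most `2q + 2`. -/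
theorem tfractal_diameter_bound (q : ℕ) :
    (TFractal q).Connected ∧
      ∀ u v : Fin (2 ^ q + 1), (TFractal q).dist u v ≤ 2 * q + 2 := by
  have hconn : (TFractal q).Connected := by
    rw [SimpleGraph.connected_iff]
    refine ⟨fun u v => ((tf_dist_sig q u).1.symm.trans (tf_dist_sig q v).1), ⟨sigV q⟩⟩
  refine ⟨hconn, fun u v => ?_⟩
  calc (TFractal q).dist u v ≤ (TFractal q).dist u (sigV q) + (TFractal q).dist (sigV q) v :=
        hconn.dist_triangle
    _ ≤ (q + 1) + (q + 1) := by
        have h1 := (tf_dist_sig q u).2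
        have h2 := (tf_dist_sig q v).2
        rw [SimpleGraph.dist_comm] at h1
        omega
    _ = 2 * q + 2 := by ring
end
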